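/- (Key inductive identity for the thick case.) Let n ≥ 2, ρ_n = −Σ_{i=1}^n i ε_i and ρ_{n−1} = −Σ_{i=1}^{n−1} i ε_{i+1}. Then in ℚ[ℤ^n]: Σ_{w∈S_n} sgn(w) e^{w(ρ_n)} · (e^{ε_1+⋯+ε_n} − e^{−ε_1−⋯−ε_n}) = Σ_{w∈S_n} sgn(w) · w( e^{ρ_{n−1}} ∏_{i=1}^n (1 − e^{−ε_1−ε_i}) ). -/

import Mathlib

open Finset

namespace ThickAux

variable {n : ℕ}

/-- The twisted action of a permutation on the group algebra, as a ring hom. -/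
noncomputable def T (w : Equiv.Perm (Fin n)) :
    AddMonoidAlgebra ℚ (Fin n → ℤ) →+* AddMonoidAlgebra ℚ (Fin n → ℤ) :=
  AddMonoidAlgebra.mapDomainRingHom ℚ
    (AddMonoidHom.mk' (fun v : Fin n → ℤ => v ∘ w.symm) (fun _ _ => rfl))

lemma T_apply (w : Equiv.Perm (Fin n)) (f : AddMonoidAlgebra ℚ (Fin n → ℤ)) :
    T w f = AddMonoidAlgebra.mapDomain (fun v : Fin n → ℤ => v ∘ w.symm) f := rfl

lemma T_single (w : Equiv.Perm (Fin n)) (v : Fin n → ℤ) (r : ℚ) :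
    T w (AddMonoidAlgebra.single v r) = AddMonoidAlgebra.single (v ∘ w.symm) r := by
  rw [T_apply, AddMonoidAlgebra.mapDomain_single]

lemma T_smul (w : Equiv.Perm (Fin n)) (r : ℚ) (f : AddMonoidAlgebra ℚ (Fin n → ℤ)) :
    T w (r • f) = r • T w f := by
  rw [T_apply, T_apply]
  ext; simp [Finsupp.mapDomain_smul]

lemma T_T (w u : Equiv.Perm (Fin n)) (f : AddMonoidAlgebra ℚ (Fin n → ℤ)) :
    T w (T u f) = T (w * u) f := by
  rw [T_apply, T_apply, T_apply]
  show AddMonoidAlgebra.ofCoeff (Finsupp.mapDomain _ (Finsupp.mapDomain _ f.coeff)) =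
    AddMonoidAlgebra.ofCoeff (Finsupp.mapDomain _ f.coeff)
  rw [← Finsupp.mapDomain_comp]
  rfl

/-- The alternating-sum operator. -/
noncomputable def J (f : AddMonoidAlgebra ℚ (Fin n → ℤ)) : AddMonoidAlgebra ℚ (Fin n → ℤ) :=
  ∑ w : Equiv.Perm (Fin n), ((Equiv.Perm.sign w : ℤ) : ℚ) • T w f

lemma sgn_mul (w u : Equiv.Perm (Fin n)) :
    ((Equiv.Perm.sign (w * u) : ℤ) : ℚ)
      = ((Equiv.Perm.sign w : ℤ) : ℚ) * ((Equiv.Perm.sign u : ℤ) : ℚ) := by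
  rw [map_mul]; push_cast [Units.val_mul]; ring

lemma sgn_sq (u : Equiv.Perm (Fin n)) :
    ((Equiv.Perm.sign u : ℤ) : ℚ) * ((Equiv.Perm.sign u : ℤ) : ℚ) = 1 := by
  rcases Int.units_eq_one_or (Equiv.Perm.sign u) with h | h <;> simp [h]

lemma J_sum {ι : Type*} (s : Finset ι) (F : ι → AddMonoidAlgebra ℚ (Fin n → ℤ)) :
    J (∑ t ∈ s, F t) = ∑ t ∈ s, J (F t) := by
  unfold J
  simp_rw [map_sum, Finset.smul_sum]
  exact Finset.sum_comm

lemma J_smul (r : ℚ) (f : AddMonoidAlgebra ℚ (Fin n → ℤ)) : J (r • f) = r • J f := by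
  unfold J
  rw [Finset.smul_sum]
  exact Finset.sum_congr rfl fun w _ => by rw [T_smul, smul_comm]

lemma J_T (u : Equiv.Perm (Fin n)) (f : AddMonoidAlgebra ℚ (Fin n → ℤ)) :
    J (T u f) = ((Equiv.Perm.sign u : ℤ) : ℚ) • J f := by
  unfold J
  rw [Finset.smul_sum]
  refine Fintype.sum_equiv (Equiv.mulRight u) _ _ fun w => ?_
  simp only [Equiv.coe_mulRight]
  rw [T_T, smul_smul, sgn_mul, show ((Equiv.Perm.sign u : ℤ) : ℚ) *
      (((Equiv.Perm.sign w : ℤ) : ℚ) * ((Equiv.Perm.sign u : ℤ) : ℚ))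
      = ((Equiv.Perm.sign w : ℤ) : ℚ) by
    rw [mul_comm ((Equiv.Perm.sign w : ℤ) : ℚ), ← mul_assoc, sgn_sq, one_mul]]

lemma J_mul_right (f g : AddMonoidAlgebra ℚ (Fin n → ℤ)) (hg : ∀ w, T w g = g) :
    J (f * g) = J f * g := by
  unfold J
  rw [Finset.sum_mul]
  exact Finset.sum_congr rfl fun w _ => by rw [map_mul, hg w, smul_mul_assoc]

lemma J_swap_zero (v : Fin n → ℤ) (p q : Fin n) (hpq : p ≠ q)
    (hv : v ∘ (Equiv.swap p q) = v) : J (AddMonoidAlgebra.single v (1 : ℚ)) = 0 := by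
  have h1 : T (Equiv.swap p q) (AddMonoidAlgebra.single v (1 : ℚ))
      = AddMonoidAlgebra.single v 1 := by
    rw [T_single, Equiv.symm_swap, hv]
  have h2 := J_T (Equiv.swap p q) (AddMonoidAlgebra.single v (1 : ℚ))
  rw [h1, Equiv.Perm.sign_swap hpq] at h2
  have h2' : J (AddMonoidAlgebra.single v (1 : ℚ))
      = (-1 : ℚ) • J (AddMonoidAlgebra.single v (1 : ℚ)) := by
    simpa using h2
  have h3 : ((1 : ℚ) - (-1)) • J (AddMonoidAlgebra.single v (1 : ℚ)) = 0 := by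
    rw [sub_smul, one_smul, ← h2', sub_self]
  have := smul_eq_zero.mp h3
  simpa using this.resolve_left (by norm_num)

lemma T_const (w : Equiv.Perm (Fin n)) (a : ℤ) (r : ℚ) :
    T w (AddMonoidAlgebra.single (fun _ => a) r)
      = AddMonoidAlgebra.single (fun _ => a) r := by
  rw [T_single]; rfl

/-- The elementary symmetric sums `E m = Σ_{|t| = m} e^{-Σ_{i ∈ t} ε_i}`. -/
noncomputable def E (n m : ℕ) : AddMonoidAlgebra ℚ (Fin n → ℤ) :=
  ∑ t ∈ Finset.powersetCard m (univ : Finset (Fin n)),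
    AddMonoidAlgebra.single (-(∑ i ∈ t, Pi.single i (1 : ℤ))) (1 : ℚ)

lemma T_E (w : Equiv.Perm (Fin n)) (m : ℕ) : T w (E n m) = E n m := by
  unfold E
  rw [map_sum]
  refine Finset.sum_bij' (fun t _ => t.map w.toEmbedding)
    (fun t _ => t.map w.symm.toEmbedding) ?_ ?_ ?_ ?_ ?_
  · intro t ht
    simp only [Finset.mem_powersetCard] at ht ⊢
    exact ⟨Finset.subset_univ _, by rw [Finset.card_map, ht.2]⟩
  · intro t ht
    simp only [Finset.mem_powersetCard] at ht ⊢
    exact ⟨Finset.subset_univ _, by rw [Finset.card_map, ht.2]⟩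
  · intro t _
    ext a
    simp
  · intro t _
    ext a
    simp
  · intro t _
    rw [T_single]
    congr 1
    funext x
    simp only [Function.comp_apply, Pi.neg_apply, Finset.sum_apply, Finset.sum_map,
      Equiv.coe_toEmbedding]
    congr 1
    refine Finset.sum_congr rfl fun i _ => ?_
    rw [Pi.single_apply, Pi.single_apply]
    simp only [Equiv.symm_apply_eq]

end ThickAux

/-- Key inductive identity for the thick case.  With `ρ_n = −Σ_{i=1}^n i ε_i` and
`ρ_{n−1} = −Σ_{i=1}^{n−1} i ε_{i+1}`, in `ℚ[ℤ^n]`: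
`(Σ_w sgn(w) e^{w(ρ_n)}) (e^{ε_1+⋯+ε_n} − e^{−ε_1−⋯−ε_n})
  = Σ_w sgn(w) w( e^{ρ_{n−1}} ∏_{i=1}^n (1 − e^{−ε_1−ε_i}) )`. -/
theorem thick_inductive_identity (n : ℕ) (hn : 2 ≤ n)
    (e : (Fin n → ℤ) → AddMonoidAlgebra ℚ (Fin n → ℤ))
    (he : ∀ v, e v = AddMonoidAlgebra.single v 1)
    (ρn : Fin n → ℤ) (hρn : ρn = fun i => -((i.val : ℤ) + 1))
    (ρn1 : Fin n → ℤ) (hρn1 : ρn1 = fun i => -(i.val : ℤ)) :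
    (∑ w : Equiv.Perm (Fin n), ((Equiv.Perm.sign w : ℤ) : ℚ) • e (ρn ∘ w.symm)) *
        (e (fun _ => 1) - e (fun _ => -1)) =
      ∑ w : Equiv.Perm (Fin n), ((Equiv.Perm.sign w : ℤ) : ℚ) •
        AddMonoidAlgebra.mapDomain (fun v : Fin n → ℤ => v ∘ w.symm)
          (e ρn1 * ∏ i : Fin n,
            (1 - e (-(Pi.single (⟨0, by omega⟩ : Fin n) 1 + Pi.single i 1)))) := by
  obtain ⟨k, rfl⟩ : ∃ k, n = k + 2 := ⟨n - 2, by omega⟩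
  subst hρn hρn1
  simp only [he]
  set p0 : Fin (k + 2) := ⟨0, by omega⟩ with hp0
  set ρf : Fin (k + 2) → ℤ := fun i => -((i.val : ℤ) + 1) with hρf
  set ρ1f : Fin (k + 2) → ℤ := fun i => -(i.val : ℤ) with hρ1f
  -- Convert both alternating sums to the operator `J`.
  have hL1 : (∑ w : Equiv.Perm (Fin (k + 2)), ((Equiv.Perm.sign w : ℤ) : ℚ) •
        AddMonoidAlgebra.single (ρf ∘ ⇑(Equiv.symm w)) (1 : ℚ))
      = ThickAux.J (AddMonoidAlgebra.single ρf 1) := by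
    unfold ThickAux.J
    exact Finset.sum_congr rfl fun w _ => by rw [ThickAux.T_single]
  have hR1 : ∀ f : AddMonoidAlgebra ℚ (Fin (k + 2) → ℤ),
      (∑ w : Equiv.Perm (Fin (k + 2)), ((Equiv.Perm.sign w : ℤ) : ℚ) •
        AddMonoidAlgebra.mapDomain (fun v : Fin (k + 2) → ℤ => v ∘ ⇑(Equiv.symm w)) f)
      = ThickAux.J f := fun f =>
    Finset.sum_congr rfl fun w _ => by rw [ThickAux.T_apply]
  rw [hL1, hR1]
  -- Expand the product over subsets.
  have hP : (∏ i : Fin (k + 2), ((1 : AddMonoidAlgebra ℚ (Fin (k + 2) → ℤ)) -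
        AddMonoidAlgebra.single (-(Pi.single p0 1 + Pi.single i 1)) (1 : ℚ)))
      = ∑ t ∈ (univ : Finset (Fin (k + 2))).powerset,
          AddMonoidAlgebra.single
            ((-(t.card • Pi.single p0 (1 : ℤ))) + -(∑ i ∈ t, Pi.single i (1 : ℤ)))
            ((-1 : ℚ) ^ t.card) := by
    have h1 : ∀ i : Fin (k + 2), (1 : AddMonoidAlgebra ℚ (Fin (k + 2) → ℤ)) -
        AddMonoidAlgebra.single (-(Pi.single p0 1 + Pi.single i 1)) (1 : ℚ)
        = AddMonoidAlgebra.single (-(Pi.single p0 1 + Pi.single i 1)) (-1 : ℚ) + 1 := by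
      intro i
      rw [sub_eq_neg_add, ← AddMonoidAlgebra.single_neg]
    rw [Finset.prod_congr rfl fun i _ => h1 i, Finset.prod_add]
    refine Finset.sum_congr rfl fun t ht => ?_
    rw [Finset.prod_const_one, mul_one, AddMonoidAlgebra.prod_single, Finset.prod_const]
    congr 1
    rw [Finset.sum_neg_distrib, Finset.sum_add_distrib, Finset.sum_const, neg_add]
  rw [hP, Finset.mul_sum, ThickAux.J_sum]
  have hmerge : ∀ t : Finset (Fin (k + 2)),
      AddMonoidAlgebra.single ρ1f (1 : ℚ) *
        AddMonoidAlgebra.single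
          ((-(t.card • Pi.single p0 (1 : ℤ))) + -(∑ i ∈ t, Pi.single i (1 : ℤ)))
          ((-1 : ℚ) ^ t.card)
      = AddMonoidAlgebra.single
          ((ρ1f + -(t.card • Pi.single p0 (1 : ℤ))) + -(∑ i ∈ t, Pi.single i (1 : ℤ)))
          ((-1 : ℚ) ^ t.card) := by
    intro t
    rw [AddMonoidAlgebra.single_mul_single, one_mul, ← add_assoc]
  simp only [hmerge]
  rw [Finset.sum_powerset]
  simp only [Finset.card_univ, Fintype.card_fin]
  -- Identify each inner sum.
  have hinner : ∀ j : ℕ,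
      (∑ t ∈ Finset.powersetCard j (univ : Finset (Fin (k + 2))),
        ThickAux.J (AddMonoidAlgebra.single
          ((ρ1f + -(t.card • Pi.single p0 (1 : ℤ))) + -(∑ i ∈ t, Pi.single i (1 : ℤ)))
          ((-1 : ℚ) ^ t.card)))
      = ((-1 : ℚ) ^ j) •
          (ThickAux.J (AddMonoidAlgebra.single (ρ1f + -(j • Pi.single p0 (1 : ℤ))) 1) *
            ThickAux.E (k + 2) j) := by
    intro j
    have h2 : ∀ t ∈ Finset.powersetCard j (univ : Finset (Fin (k + 2))),
        ThickAux.J (AddMonoidAlgebra.single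
          ((ρ1f + -(t.card • Pi.single p0 (1 : ℤ))) + -(∑ i ∈ t, Pi.single i (1 : ℤ)))
          ((-1 : ℚ) ^ t.card))
        = ((-1 : ℚ) ^ j) • ThickAux.J
            (AddMonoidAlgebra.single (ρ1f + -(j • Pi.single p0 (1 : ℤ))) 1 *
              AddMonoidAlgebra.single (-(∑ i ∈ t, Pi.single i (1 : ℤ))) 1) := by
      intro t ht
      have hc : t.card = j := (Finset.mem_powersetCard.mp ht).2
      rw [hc, AddMonoidAlgebra.single_mul_single, one_mul,
        show ((-1 : ℚ) ^ j) = ((-1 : ℚ) ^ j) * 1 from (mul_one _).symm,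
        ← AddMonoidAlgebra.smul_single', ThickAux.J_smul]
      rw [mul_one]
    rw [Finset.sum_congr rfl h2, ← Finset.smul_sum, ← ThickAux.J_sum, ← Finset.mul_sum,
      show (∑ t ∈ Finset.powersetCard j (univ : Finset (Fin (k + 2))),
        AddMonoidAlgebra.single (-(∑ i ∈ t, Pi.single i (1 : ℤ))) (1 : ℚ))
        = ThickAux.E (k + 2) j from rfl,
      ThickAux.J_mul_right _ _ (fun w => ThickAux.T_E w j)]
  rw [Finset.sum_congr rfl fun j _ => hinner j]
  -- Peel off the `j = k+2` and `j = 0` terms; the middle terms vanish.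
  rw [Finset.sum_range_succ, Finset.sum_range_succ']
  -- Middle terms vanish by the swap symmetry.
  have hvan : ∀ i : ℕ, i < k + 1 →
      ThickAux.J (AddMonoidAlgebra.single (ρ1f + -((i + 1) • Pi.single p0 (1 : ℤ))) (1 : ℚ)) = 0 := by
    intro i hi
    have hne : (⟨0, by omega⟩ : Fin (k + 2)) ≠ ⟨i + 1, by omega⟩ := by
      simp [Fin.ext_iff]
    refine ThickAux.J_swap_zero _ ⟨0, by omega⟩ ⟨i + 1, by omega⟩ hne ?_
    funext x
    simp only [Function.comp_apply, Pi.add_apply, Pi.neg_apply, Pi.smul_apply, smul_eq_mul,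
      nsmul_eq_mul, Nat.cast_mul]
    rcases eq_or_ne x ⟨0, by omega⟩ with rfl | hx0
    · rw [Equiv.swap_apply_left]
      simp [hρ1f, hp0, Pi.single_apply, Fin.ext_iff]
    · rcases eq_or_ne x ⟨i + 1, by omega⟩ with rfl | hx1
      · rw [Equiv.swap_apply_right]
        simp [hρ1f, hp0, Pi.single_apply, Fin.ext_iff]
      · rw [Equiv.swap_apply_of_ne_of_ne hx0 hx1]
  rw [Finset.sum_eq_zero fun i hi => by
    rw [hvan i (Finset.mem_range.mp hi), zero_mul, smul_zero]]
  -- the `j = 0` term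
  have hE0 : ThickAux.E (k + 2) 0 = 1 := by
    unfold ThickAux.E
    rw [Finset.powersetCard_zero, Finset.sum_singleton]
    simp [AddMonoidAlgebra.one_def]
  have hμ0 : ρ1f + -((0 : ℕ) • Pi.single p0 (1 : ℤ)) = ρ1f := by simp
  -- the `j = k + 2` term
  have hEtop : ThickAux.E (k + 2) (k + 2)
      = AddMonoidAlgebra.single (fun _ : Fin (k + 2) => (-1 : ℤ)) 1 := by
    unfold ThickAux.E
    have hps : Finset.powersetCard (k + 2) (univ : Finset (Fin (k + 2))) = {univ} := by
      simpa using Finset.powersetCard_self (univ : Finset (Fin (k + 2)))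
    rw [hps, Finset.sum_singleton]
    congr 1
    funext x
    simp [Finset.sum_apply, Pi.single_apply]
  have hrot : AddMonoidAlgebra.single (ρ1f + -((k + 2) • Pi.single p0 (1 : ℤ))) (1 : ℚ)
      = ThickAux.T (finRotate (k + 2)) (AddMonoidAlgebra.single ρf 1) := by
    rw [ThickAux.T_single]
    congr 1
    have h1 : ∀ y : Fin (k + 2),
        ((ρ1f + -((k + 2) • Pi.single p0 (1 : ℤ)) : Fin (k + 2) → ℤ)) (finRotate (k + 2) y)
          = ρf y := by
      intro y
      rw [show (finRotate (k + 2) y) = y + 1 from finRotate_succ_apply y]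
      rcases eq_or_ne y (Fin.last (k + 1)) with rfl | hy
      · have hlast : (Fin.last (k + 1) + 1 : Fin (k + 2)) = p0 := by
          rw [Fin.last_add_one, hp0]
          ext
          simp
        rw [hlast]
        simp [hρ1f, hρf, hp0, Pi.single_apply, Fin.val_last]
        ring
      · have hv1 : ((y + 1 : Fin (k + 2)).val) = y.val + 1 := by
          rw [Fin.val_add_one]
          simp [hy]
        have hne : (y + 1 : Fin (k + 2)) ≠ p0 := by
          rw [hp0]
          intro h
          have h' := congrArg Fin.val h
          rw [hv1] at h'
          simp at h'
        simp [hρ1f, hρf, Pi.single_apply, hne, hv1]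
    funext x
    have h2 := h1 ((finRotate (k + 2)).symm x)
    rw [Equiv.apply_symm_apply] at h2
    exact h2
  have hsign : ((Equiv.Perm.sign (finRotate (k + 2)) : ℤ) : ℚ) = (-1 : ℚ) ^ (k + 1) := by
    rw [sign_finRotate]
    simp [Units.val_pow_eq_pow_val]
  rw [hE0, hμ0, hEtop, hrot, ThickAux.J_T, hsign]
  -- rewrite the left-hand side
  rw [mul_sub, ← ThickAux.J_mul_right _ _ (fun w => ThickAux.T_const w 1 1),
    AddMonoidAlgebra.single_mul_single]
  have hρadd : ρf + (fun _ : Fin (k + 2) => (1 : ℤ)) = ρ1f := by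
    funext x
    simp [hρf, hρ1f]
  rw [hρadd, mul_one]
  -- final algebra
  rw [zero_add, pow_zero, one_smul, mul_one, smul_mul_assoc, smul_smul, ← pow_add]
  have hodd : ((-1 : ℚ)) ^ (k + 2 + (k + 1)) = -1 := Odd.neg_one_pow ⟨k + 1, by ring⟩
  rw [hodd, neg_one_smul, ← sub_eq_add_neg]
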